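/- Let p be a prime, k ≥ 1, q a power of p, and s ≥ 2, m_1, …, m_s ≥ 1 with p^{k-1} + 1 + m_1 + … + m_s = n. Then p^k · lcm(q^{m_1} - (-1)^{m_1}, …, q^{m_s} - (-1)^{m_s}) ≤ (q+1) · q^{n-3}. -/

import Mathlib

open Finset

lemma lcm_bound_aux {s : ℕ} (f g : Fin s → ℤ) (d : ℤ) (hd : 0 < d)
    (hf : ∀ i, 0 < f i) (hdvd : ∀ i, d ∣ f i) (hfg : ∀ i, f i ≤ d * g i)
    (hg : ∀ i, 1 ≤ g i) (t : Finset (Fin s)) :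
    0 < t.lcm f ∧ t.lcm f ≤ d * ∏ i ∈ t, g i ∧ (t.Nonempty → d ∣ t.lcm f) := by
  classical
  induction t using Finset.induction with
  | empty =>
    simp only [Finset.lcm_empty, Finset.prod_empty, mul_one]
    exact ⟨one_pos, by linarith, fun h => absurd h (by simp)⟩
  | @insert a t ha ih =>
    obtain ⟨hL, hLb, hLd⟩ := ih
    have hx := hf a
    have hlcm_nonneg : (0:ℤ) ≤ lcm (f a) (t.lcm f) := by
      rw [← Int.coe_lcm]; positivity
    have hlcm_ne : lcm (f a) (t.lcm f) ≠ 0 :=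
      by simp [_root_.lcm_eq_zero_iff, (hf a).ne', hL.ne']
    have hPpos : (0:ℤ) < ∏ i ∈ t, g i :=
      Finset.prod_pos fun i _ => lt_of_lt_of_le one_pos (hg i)
    rw [Finset.lcm_insert, Finset.prod_insert ha]
    refine ⟨lt_of_le_of_ne hlcm_nonneg (Ne.symm hlcm_ne), ?_,
      fun _ => dvd_trans (hdvd a) (dvd_lcm_left _ _)⟩
    rcases t.eq_empty_or_nonempty with rfl | hne
    · simp only [Finset.lcm_empty, lcm_one_right, Finset.prod_empty, mul_one]
      calc normalize (f a) = f a := Int.normalize_of_nonneg (hf a).le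
        _ ≤ d * g a := hfg a
    · obtain ⟨c, hc⟩ := hLd hne
      have hcpos : 0 < c := by nlinarith
      obtain ⟨u, hu⟩ := hdvd a
      have hdvd2 : lcm (f a) (t.lcm f) ∣ f a * c := by
        refine lcm_dvd ⟨c, rfl⟩ ⟨u, ?_⟩
        rw [hc, hu]; ring
      have hle : lcm (f a) (t.lcm f) ≤ f a * c :=
        Int.le_of_dvd (by positivity) hdvd2
      have hcP : c ≤ ∏ i ∈ t, g i := by
        rw [hc] at hLb
        exact le_of_mul_le_mul_left hLb hd
      nlinarith [hfg a, hg a]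

theorem stmt9 (p : ℕ) (hp : p.Prime) (k : ℕ) (hk : 1 ≤ k) (q : ℤ) (e : ℕ) (he : 1 ≤ e)
    (hq : q = (p : ℤ) ^ e) (s : ℕ) (hs : 2 ≤ s) (m : Fin s → ℕ) (hm : ∀ i, 1 ≤ m i)
    (n : ℕ) (hsum : p ^ (k - 1) + 1 + ∑ i, m i = n) :
    (p : ℤ) ^ k * (Finset.univ.lcm fun i : Fin s => q ^ (m i) - (-1) ^ (m i)) ≤
      (q + 1) * q ^ (n - 3) := by
  have hp2 : 2 ≤ p := hp.two_le
  have hp2' : (2:ℤ) ≤ (p:ℤ) := by exact_mod_cast hp2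
  have hq2 : (2:ℤ) ≤ q := by
    rw [hq]
    calc (2:ℤ) ≤ (p:ℤ) := hp2'
      _ ≤ (p:ℤ) ^ e := le_self_pow₀ (by linarith) (by omega)
  have hq1 : (1:ℤ) ≤ q := by linarith
  set f : Fin s → ℤ := fun i => q ^ (m i) - (-1) ^ (m i) with hfdef
  set g : Fin s → ℤ := fun i => q ^ (m i - 1) with hgdef
  have hneg1 : ∀ j : ℕ, (-1:ℤ) ^ j = 1 ∨ (-1:ℤ) ^ j = -1 := by
    intro j
    rcases Nat.even_or_odd j with h | h
    · left; exact h.neg_one_pow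
    · right; exact h.neg_one_pow
  have hfpos : ∀ i, 0 < f i := by
    intro i
    have h1 : q ≤ q ^ (m i) := le_self_pow₀ hq1 (by have := hm i; omega : m i ≠ 0)
    rcases hneg1 (m i) with h | h <;> simp only [hfdef, h] <;> linarith
  have hdvd : ∀ i, (q + 1) ∣ f i := by
    intro i
    have := sub_dvd_pow_sub_pow q (-1) (m i)
    simpa [sub_neg_eq_add] using this
  have hfg : ∀ i, f i ≤ (q + 1) * g i := by
    intro i
    obtain ⟨t, ht⟩ := Nat.exists_eq_add_of_le (hm i)
    have hgt : (1:ℤ) ≤ q ^ t := one_le_pow₀ hq1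
    have hpow : q ^ (m i) = q * q ^ t := by rw [ht, pow_add, pow_one]
    have hsub : m i - 1 = t := by omega
    rcases hneg1 (m i) with h | h <;>
      simp only [hfdef, hgdef, h, hsub] <;> nlinarith
  have hg1 : ∀ i, (1:ℤ) ≤ g i := fun i => one_le_pow₀ hq1
  obtain ⟨hLpos, hLle, -⟩ :=
    lcm_bound_aux f g (q + 1) (by linarith) hfpos hdvd hfg hg1 Finset.univ
  have hprod : ∏ i, g i = q ^ (∑ i, (m i - 1)) := Finset.prod_pow_eq_pow_sum _ _ _
  set S := ∑ i, (m i - 1) with hS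
  set M := ∑ i, m i with hM
  have hMS : M = S + s := by
    calc M = ∑ i, ((m i - 1) + 1) := Finset.sum_congr rfl (fun i _ => by have := hm i; omega)
      _ = S + ∑ _i : Fin s, 1 := Finset.sum_add_distrib
      _ = S + s := by simp
  set E := p ^ (k - 1) with hE
  have hkE : k ≤ e * E := by
    have h1 : k - 1 < 2 ^ (k - 1) := Nat.lt_two_pow_self (n := k - 1)
    have h2 : 2 ^ (k - 1) ≤ E := Nat.pow_le_pow_left hp2 _
    have h3 : k ≤ E := by omega
    calc k ≤ E := h3
      _ ≤ e * E := Nat.le_mul_of_pos_left _ he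
  have hpk : (p:ℤ) ^ k ≤ q ^ E := by
    rw [hq, ← pow_mul]
    exact pow_le_pow_right₀ (by linarith) hkE
  have hES : E + S ≤ n - 3 := by omega
  calc (p:ℤ) ^ k * Finset.univ.lcm f ≤ q ^ E * ((q + 1) * q ^ S) := by
        apply mul_le_mul hpk (by rw [hprod] at hLle; exact hLle) hLpos.le
        positivity
    _ = (q + 1) * q ^ (E + S) := by rw [pow_add]; ring
    _ ≤ (q + 1) * q ^ (n - 3) := by
        apply mul_le_mul_of_nonneg_left (pow_le_pow_right₀ hq1 hES) (by linarith)
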